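/- Let C, D be nonzero reals, φ₀, ϑ ∈ ℝ with sin(ϑ − φ₀) ≠ 0, and let a_{ij}, b_{ij} (1 ≤ i,j ≤ 2) be reals. Define χ₂ : ℝ → ℝ by χ₂(φ) = (1/(C·D·sin(ϑ − φ₀)))·[ C|C|·cos(φ−φ₀)|cos(φ−φ₀)|·(a₁₁·D·sin(ϑ−φ) + b₁₁·C·sin(φ−φ₀)) + C|D|·cos(φ−φ₀)|cos(φ−ϑ)|·(a₁₂·D·sin(ϑ−φ) + b₁₂·C·sin(φ−φ₀)) + |C|D·cos(φ−ϑ)|cos(φ−φ₀)|·(a₂₁·D·sin(ϑ−φ) + b₂₁·C·sin(φ−φ₀)) + D|D|·cos(φ−ϑ)|cos(φ−ϑ)|·(a₂₂·D·sin(ϑ−φ) + b₂₂·C·sin(φ−φ₀)) ]. Then ∫₀^{2π} χ₂(φ) dφ = (4/3)·[ 2|C|a₁₁ + |D|a₁₂ + |C|b₂₁ + 2|D|b₂₂ + cos(ϑ − φ₀)·(sgn(C)·D·a₂₁ + sgn(D)·C·b₁₂) ]. -/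

import Mathlib

open Real

noncomputable def Fj (α θ β : ℝ) (φ : ℝ) : ℝ :=
  Real.cos (φ - α) * |Real.cos (φ - θ)| * Real.sin (φ - β)

@[fun_prop]
lemma contFj (α θ β : ℝ) : Continuous (Fj α θ β) := by
  unfold Fj; fun_prop

lemma split3 (f : ℝ → ℝ) (hf : Continuous f) :
    (∫ x in (0:ℝ)..(2*π), f x)
      = (∫ x in (0:ℝ)..(π/2), f x) + (∫ x in (π/2)..(3*π/2), f x)
        + (∫ x in (3*π/2)..(2*π), f x) := by
  have h1 : (∫ x in (0:ℝ)..(π/2), f x) + (∫ x in (π/2)..(3*π/2), f x)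
      = ∫ x in (0:ℝ)..(3*π/2), f x :=
    intervalIntegral.integral_add_adjacent_intervals
      (hf.intervalIntegrable _ _) (hf.intervalIntegrable _ _)
  have h2 : (∫ x in (0:ℝ)..(3*π/2), f x) + (∫ x in (3*π/2)..(2*π), f x)
      = ∫ x in (0:ℝ)..(2*π), f x :=
    intervalIntegral.integral_add_adjacent_intervals
      (hf.intervalIntegrable _ _) (hf.intervalIntegrable _ _)
  linarith

lemma cos_nonneg_left : ∀ x ∈ Set.uIcc (0:ℝ) (π/2), 0 ≤ Real.cos x := by
  intro x hx
  rw [Set.uIcc_of_le (by positivity)] at hx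
  exact Real.cos_nonneg_of_mem_Icc ⟨by linarith [hx.1, Real.pi_pos], hx.2⟩

lemma cos_nonpos_mid : ∀ x ∈ Set.uIcc (π/2) (3*π/2), Real.cos x ≤ 0 := by
  intro x hx
  rw [Set.uIcc_of_le (by linarith [Real.pi_pos])] at hx
  exact Real.cos_nonpos_of_pi_div_two_le_of_le hx.1 (by linarith [hx.2])

lemma cos_nonneg_right : ∀ x ∈ Set.uIcc (3*π/2) (2*π), 0 ≤ Real.cos x := by
  intro x hx
  rw [Set.uIcc_of_le (by linarith [Real.pi_pos])] at hx
  have : Real.cos x = Real.cos (x - 2*π) := (Real.cos_sub_two_pi x).symm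
  rw [this]
  exact Real.cos_nonneg_of_mem_Icc ⟨by linarith [hx.1], by linarith [hx.2, Real.pi_pos]⟩

lemma sin_3pi2 : Real.sin (3*π/2) = -1 := by
  rw [show (3*π/2 : ℝ) = π + π/2 by ring, Real.sin_add]; simp

lemma cos_3pi2 : Real.cos (3*π/2) = 0 := by
  rw [show (3*π/2 : ℝ) = π + π/2 by ring, Real.cos_add]; simp

lemma habs1 : (∫ x in (0:ℝ)..(2*π), |Real.cos x| * Real.cos x ^ 2) = 8/3 := by
  rw [split3 _ (by fun_prop)]
  rw [intervalIntegral.integral_congr (a := (0:ℝ)) (b := π/2) (g := fun x => Real.cos x ^ 3)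
      (fun x hx => by rw [abs_of_nonneg (cos_nonneg_left x hx)]; ring),
    intervalIntegral.integral_congr (a := π/2) (b := 3*π/2) (g := fun x => -(Real.cos x ^ 3))
      (fun x hx => by rw [abs_of_nonpos (cos_nonpos_mid x hx)]; ring),
    intervalIntegral.integral_congr (a := 3*π/2) (b := 2*π) (g := fun x => Real.cos x ^ 3)
      (fun x hx => by rw [abs_of_nonneg (cos_nonneg_right x hx)]; ring)]
  rw [intervalIntegral.integral_neg]
  rw [integral_cos_pow_three, integral_cos_pow_three, integral_cos_pow_three]
  simp [sin_3pi2, Real.sin_two_pi]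
  norm_num

lemma habs2 : (∫ x in (0:ℝ)..(2*π), |Real.cos x| * (Real.sin x * Real.cos x)) = 0 := by
  rw [split3 _ (by fun_prop)]
  rw [intervalIntegral.integral_congr (a := (0:ℝ)) (b := π/2) (g := fun x => Real.sin x * Real.cos x ^ 2)
      (fun x hx => by rw [abs_of_nonneg (cos_nonneg_left x hx)]; ring),
    intervalIntegral.integral_congr (a := π/2) (b := 3*π/2) (g := fun x => -(Real.sin x * Real.cos x ^ 2))
      (fun x hx => by rw [abs_of_nonpos (cos_nonpos_mid x hx)]; ring),
    intervalIntegral.integral_congr (a := 3*π/2) (b := 2*π) (g := fun x => Real.sin x * Real.cos x ^ 2)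
      (fun x hx => by rw [abs_of_nonneg (cos_nonneg_right x hx)]; ring)]
  rw [intervalIntegral.integral_neg]
  rw [integral_sin_mul_cos_sq, integral_sin_mul_cos_sq, integral_sin_mul_cos_sq]
  simp [cos_3pi2, Real.cos_two_pi]
  norm_num

lemma habs3 : (∫ x in (0:ℝ)..(2*π), |Real.cos x| * Real.sin x ^ 2) = 4/3 := by
  rw [split3 _ (by fun_prop)]
  rw [intervalIntegral.integral_congr (a := (0:ℝ)) (b := π/2) (g := fun x => Real.sin x ^ 2 * Real.cos x)
      (fun x hx => by rw [abs_of_nonneg (cos_nonneg_left x hx)]; ring),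
    intervalIntegral.integral_congr (a := π/2) (b := 3*π/2) (g := fun x => -(Real.sin x ^ 2 * Real.cos x))
      (fun x hx => by rw [abs_of_nonpos (cos_nonpos_mid x hx)]; ring),
    intervalIntegral.integral_congr (a := 3*π/2) (b := 2*π) (g := fun x => Real.sin x ^ 2 * Real.cos x)
      (fun x hx => by rw [abs_of_nonneg (cos_nonneg_right x hx)]; ring)]
  rw [intervalIntegral.integral_neg]
  rw [integral_sin_sq_mul_cos, integral_sin_sq_mul_cos, integral_sin_sq_mul_cos]
  simp [sin_3pi2, Real.sin_two_pi]
  norm_num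

lemma intJ (α θ β : ℝ) :
    (∫ φ in (0:ℝ)..(2*π), Fj α θ β φ)
      = 8/3 * (Real.cos (θ-α) * Real.sin (θ-β))
        - 4/3 * (Real.sin (θ-α) * Real.cos (θ-β)) := by
  have hshift : ∀ φ : ℝ, Fj α θ β φ
      = (fun ψ => Real.cos (ψ + (θ - α)) * |Real.cos ψ| * Real.sin (ψ + (θ - β))) (φ - θ) := by
    intro φ
    unfold Fj
    rw [show φ - α = φ - θ + (θ - α) by ring, show φ - β = φ - θ + (θ - β) by ring]
  rw [intervalIntegral.integral_congr (fun x _ => hshift x),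
    intervalIntegral.integral_comp_sub_right
      (fun ψ => Real.cos (ψ + (θ - α)) * |Real.cos ψ| * Real.sin (ψ + (θ - β))) θ]
  have hper : Function.Periodic
      (fun ψ => Real.cos (ψ + (θ - α)) * |Real.cos ψ| * Real.sin (ψ + (θ - β))) (2*π) := by
    intro x
    simp only [show ∀ c : ℝ, x + 2*π + c = x + c + 2*π from fun c => by ring,
      Real.cos_add_two_pi, Real.sin_add_two_pi]
  have hkey := hper.intervalIntegral_add_eq (-θ) 0
  rw [show (0:ℝ) - θ = -θ by ring, show 2*π - θ = -θ + 2*π by ring, hkey, zero_add]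
  have hexp : ∀ ψ : ℝ, Real.cos (ψ + (θ - α)) * |Real.cos ψ| * Real.sin (ψ + (θ - β))
      = (Real.cos (θ-α) * Real.sin (θ-β)) * (|Real.cos ψ| * Real.cos ψ ^ 2)
        + ((Real.cos (θ-α) * Real.cos (θ-β) - Real.sin (θ-α) * Real.sin (θ-β)))
            * (|Real.cos ψ| * (Real.sin ψ * Real.cos ψ))
        + (-(Real.sin (θ-α) * Real.cos (θ-β))) * (|Real.cos ψ| * Real.sin ψ ^ 2) := by
    intro ψ
    rw [Real.cos_add, Real.sin_add]; ring
  rw [intervalIntegral.integral_congr (fun x _ => hexp x)]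
  rw [intervalIntegral.integral_add (by apply Continuous.intervalIntegrable; fun_prop)
      (by apply Continuous.intervalIntegrable; fun_prop),
    intervalIntegral.integral_add (by apply Continuous.intervalIntegrable; fun_prop)
      (by apply Continuous.intervalIntegrable; fun_prop),
    intervalIntegral.integral_const_mul, intervalIntegral.integral_const_mul,
    intervalIntegral.integral_const_mul, habs1, habs2, habs3]
  ring

lemma int_step (c a t b : ℝ) (g : ℝ → ℝ) (hg : Continuous g) :
    (∫ φ in (0:ℝ)..(2*π), (c * Fj a t b φ + g φ))
      = c * (8/3 * (Real.cos (t-a) * Real.sin (t-b))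
          - 4/3 * (Real.sin (t-a) * Real.cos (t-b))) + ∫ φ in (0:ℝ)..(2*π), g φ := by
  rw [intervalIntegral.integral_add (f := fun φ => c * Fj a t b φ) ((continuous_const.mul (contFj a t b)).intervalIntegrable _ _)
      (hg.intervalIntegrable _ _), intervalIntegral.integral_const_mul, intJ]

set_option maxHeartbeats 1000000 in
theorem stmt18 (C D φ₀ ϑ : ℝ) (hC : C ≠ 0) (hD : D ≠ 0)
    (hdet : Real.sin (ϑ - φ₀) ≠ 0)
    (a11 a12 a21 a22 b11 b12 b21 b22 : ℝ) :
    (∫ φ in (0:ℝ)..(2 * π),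
      (1 / (C * D * sin (ϑ - φ₀))) *
        (C * |C| * (cos (φ - φ₀) * |cos (φ - φ₀)|) *
            (a11 * D * sin (ϑ - φ) + b11 * C * sin (φ - φ₀)) +
         C * |D| * (cos (φ - φ₀) * |cos (φ - ϑ)|) *
            (a12 * D * sin (ϑ - φ) + b12 * C * sin (φ - φ₀)) +
         |C| * D * (cos (φ - ϑ) * |cos (φ - φ₀)|) *
            (a21 * D * sin (ϑ - φ) + b21 * C * sin (φ - φ₀)) +
         D * |D| * (cos (φ - ϑ) * |cos (φ - ϑ)|) *
            (a22 * D * sin (ϑ - φ) + b22 * C * sin (φ - φ₀))))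
    = 4 / 3 * (2 * |C| * a11 + |D| * a12 + |C| * b21 + 2 * |D| * b22 +
        cos (ϑ - φ₀) * (Real.sign C * D * a21 + Real.sign D * C * b12)) := by
  set P : ℝ := 1 / (C * D * Real.sin (ϑ - φ₀)) with hP
  have hpt : ∀ φ : ℝ,
      P * (C * |C| * (Real.cos (φ - φ₀) * |Real.cos (φ - φ₀)|) *
            (a11 * D * Real.sin (ϑ - φ) + b11 * C * Real.sin (φ - φ₀)) +
         C * |D| * (Real.cos (φ - φ₀) * |Real.cos (φ - ϑ)|) *
            (a12 * D * Real.sin (ϑ - φ) + b12 * C * Real.sin (φ - φ₀)) +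
         |C| * D * (Real.cos (φ - ϑ) * |Real.cos (φ - φ₀)|) *
            (a21 * D * Real.sin (ϑ - φ) + b21 * C * Real.sin (φ - φ₀)) +
         D * |D| * (Real.cos (φ - ϑ) * |Real.cos (φ - ϑ)|) *
            (a22 * D * Real.sin (ϑ - φ) + b22 * C * Real.sin (φ - φ₀)))
      = (-(P * (C * |C|) * (a11 * D))) * Fj φ₀ φ₀ ϑ φ +
        ((P * (C * |C|) * (b11 * C)) * Fj φ₀ φ₀ φ₀ φ +
        ((-(P * (C * |D|) * (a12 * D))) * Fj φ₀ ϑ ϑ φ +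
        ((P * (C * |D|) * (b12 * C)) * Fj φ₀ ϑ φ₀ φ +
        ((-(P * (|C| * D) * (a21 * D))) * Fj ϑ φ₀ ϑ φ +
        ((P * (|C| * D) * (b21 * C)) * Fj ϑ φ₀ φ₀ φ +
        ((-(P * (D * |D|) * (a22 * D))) * Fj ϑ ϑ ϑ φ +
        ((P * (D * |D|) * (b22 * C)) * Fj ϑ ϑ φ₀ φ))))))) := by
    intro φ
    unfold Fj
    rw [show ϑ - φ = -(φ - ϑ) by ring, Real.sin_neg]
    ring
  rw [intervalIntegral.integral_congr (fun x _ => hpt x)]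
  rw [int_step _ _ _ _ _ (by fun_prop), int_step _ _ _ _ _ (by fun_prop),
    int_step _ _ _ _ _ (by fun_prop), int_step _ _ _ _ _ (by fun_prop),
    int_step _ _ _ _ _ (by fun_prop), int_step _ _ _ _ _ (by fun_prop),
    int_step _ _ _ _ _ (by fun_prop), intervalIntegral.integral_const_mul, intJ]
  rw [show φ₀ - ϑ = -(ϑ - φ₀) by ring, Real.sin_neg, Real.cos_neg]
  simp only [sub_self, Real.sin_zero, Real.cos_zero, mul_zero, zero_mul, mul_one, one_mul,
    sub_zero, zero_sub, add_zero, zero_add, mul_neg, neg_mul, neg_neg]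
  rcases hC.lt_or_gt with hC' | hC' <;> rcases hD.lt_or_gt with hD' | hD' <;>
    [rw [abs_of_neg hC', abs_of_neg hD', Real.sign_of_neg hC', Real.sign_of_neg hD', hP];
     rw [abs_of_neg hC', abs_of_pos hD', Real.sign_of_neg hC', Real.sign_of_pos hD', hP];
     rw [abs_of_pos hC', abs_of_neg hD', Real.sign_of_pos hC', Real.sign_of_neg hD', hP];
     rw [abs_of_pos hC', abs_of_pos hD', Real.sign_of_pos hC', Real.sign_of_pos hD', hP]] <;>
  · field_simp
    ring
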